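/- Let L be the Laplacian of a connected regular graph on a finite vertex set V, with eigenvalues 0 = λ₁ < λ₂ < λ₃ ≤ … ≤ λ_{|V|} and orthonormal eigenvectors f₁, …, f_{|V|}, where f₁ is constant and λ₂ is a simple eigenvalue. Suppose f₂(v) > f₂(u) > 0 for some vertices u, v. Then there exists t > 0 such that (e^{-tL}δ_u)(v) > (e^{-tL}δ_u)(u), where δ_u is the indicator vector of u. -/

import Mathlib

open Matrix

-- analytic helper
lemma exists_t_aux {n : ℕ} (hn3 : 3 ≤ n) (lam : Fin n → ℝ) (c : Fin n → ℝ)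
    (hmono : Monotone lam) (h23 : lam ⟨1, by omega⟩ < lam ⟨2, by omega⟩)
    (hc0 : c ⟨0, by omega⟩ = 0) (hc1 : 0 < c ⟨1, by omega⟩) :
    ∃ t : ℝ, 0 < t ∧ 0 < ∑ i, Real.exp (-t * lam i) * c i := by
  set i0 : Fin n := ⟨0, by omega⟩
  set i1 : Fin n := ⟨1, by omega⟩
  set i2 : Fin n := ⟨2, by omega⟩
  set a := lam i1
  set b := lam i2
  set C := ∑ i, |c i|
  have hd : 0 < b - a := by simp [a, b]; linarith
  have htend : Filter.Tendsto (fun t : ℝ => Real.exp (-t * (b - a)) * C)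
      Filter.atTop (nhds 0) := by
    have h1 : Filter.Tendsto (fun t : ℝ => -t * (b - a)) Filter.atTop Filter.atBot := by
      have := (Filter.tendsto_neg_atBot_iff (α := ℝ)).mpr Filter.tendsto_id
      exact Filter.Tendsto.atBot_mul_const hd (Filter.tendsto_neg_atBot_iff.mpr Filter.tendsto_id)
    have := (Real.tendsto_exp_atBot.comp h1).mul_const C
    simpa using this
  have hev : ∀ᶠ t in Filter.atTop, Real.exp (-t * (b - a)) * C < c i1 :=
    htend.eventually_lt_const hc1
  obtain ⟨t, ht, htpos⟩ := (hev.and (Filter.eventually_gt_atTop 0)).exists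
  refine ⟨t, htpos, ?_⟩
  -- split the sum
  have hne : i0 ≠ i1 := by simp [i0, i1, Fin.ext_iff]
  have hsub : ({i0, i1} : Finset (Fin n)) ⊆ Finset.univ := Finset.subset_univ _
  have hsplit : ∑ i, Real.exp (-t * lam i) * c i
      = (∑ i ∈ Finset.univ \ {i0, i1}, Real.exp (-t * lam i) * c i)
        + (Real.exp (-t * lam i0) * c i0 + Real.exp (-t * lam i1) * c i1) := by
    have hp : ∑ i ∈ ({i0, i1} : Finset (Fin n)), Real.exp (-t * lam i) * c i
        = Real.exp (-t * lam i0) * c i0 + Real.exp (-t * lam i1) * c i1 :=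
      Finset.sum_pair hne
    rw [← hp, Finset.sum_sdiff hsub]
  have hbound : |∑ i ∈ Finset.univ \ {i0, i1}, Real.exp (-t * lam i) * c i|
      ≤ Real.exp (-t * b) * C := by
    calc |∑ i ∈ Finset.univ \ {i0, i1}, Real.exp (-t * lam i) * c i|
        ≤ ∑ i ∈ Finset.univ \ {i0, i1}, |Real.exp (-t * lam i) * c i| :=
          Finset.abs_sum_le_sum_abs _ _
      _ ≤ ∑ i ∈ Finset.univ \ {i0, i1}, Real.exp (-t * b) * |c i| := by
          apply Finset.sum_le_sum
          intro i hi
          rw [abs_mul, abs_of_pos (Real.exp_pos _)]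
          apply mul_le_mul_of_nonneg_right _ (abs_nonneg _)
          apply Real.exp_le_exp.mpr
          have : i2 ≤ i := by
            simp only [Finset.mem_sdiff, Finset.mem_insert, Finset.mem_singleton] at hi
            have h2 : 2 ≤ i.val := by
              rcases hi with ⟨-, hi⟩
              push_neg at hi
              have := hi.1; have := hi.2
              simp [i0, i1, Fin.ext_iff] at *
              omega
            exact h2
          have := hmono this
          nlinarith
      _ ≤ Real.exp (-t * b) * C := by
          rw [← Finset.mul_sum]
          apply mul_le_mul_of_nonneg_left _ (Real.exp_pos _).le
          exact Finset.sum_le_sum_of_subset_of_nonneg (Finset.sdiff_subset)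
            (fun i _ _ => abs_nonneg _)
  have hkey : Real.exp (-t * b) * C < Real.exp (-t * a) * c i1 := by
    have : Real.exp (-t * b) = Real.exp (-t * a) * Real.exp (-t * (b - a)) := by
      rw [← Real.exp_add]; ring_nf
    rw [this]
    calc Real.exp (-t * a) * Real.exp (-t * (b - a)) * C
        = Real.exp (-t * a) * (Real.exp (-t * (b - a)) * C) := by ring
      _ < Real.exp (-t * a) * c i1 := by
          exact mul_lt_mul_of_pos_left ht (Real.exp_pos _)
  rw [hsplit, hc0]
  have h1 := (abs_le.mp hbound).1
  simp only [mul_zero, zero_add]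
  linarith

theorem laplacian_ratio_exceeds_one {V : Type*} [Fintype V] [DecidableEq V]
    (G : SimpleGraph V) [DecidableRel G.Adj] (hconn : G.Connected)
    (k : ℕ) (hreg : G.IsRegularOfDegree k)
    (L : Matrix V V ℝ) (hL : L = G.lapMatrix ℝ)
    (n : ℕ) (hn : n = Fintype.card V) (hn3 : 3 ≤ n)
    (lam : Fin n → ℝ) (f : Fin n → V → ℝ)
    (heig : ∀ i, L.mulVec (f i) = lam i • f i)
    (horth : ∀ i j, ∑ w, f i w * f j w = if i = j then (1 : ℝ) else 0)
    (hlam0 : lam ⟨0, by omega⟩ = 0)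
    (hmono : Monotone lam)
    (hlam12 : lam ⟨0, by omega⟩ < lam ⟨1, by omega⟩)
    (hlam23 : lam ⟨1, by omega⟩ < lam ⟨2, by omega⟩)
    (hconst : ∀ w w' : V, f ⟨0, by omega⟩ w = f ⟨0, by omega⟩ w')
    (u v : V)
    (hf2 : f ⟨1, by omega⟩ v > f ⟨1, by omega⟩ u ∧ f ⟨1, by omega⟩ u > 0) :
    ∃ t : ℝ, 0 < t ∧
      (NormedSpace.exp (-t • L)).mulVec (Pi.single u 1) v
        > (NormedSpace.exp (-t • L)).mulVec (Pi.single u 1) u := by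
  classical
  have eV : V ≃ Fin n := Fintype.equivFinOfCardEq hn.symm
  set F : Matrix V V ℝ := Matrix.of (fun w w' => f (eV w) w') with hF
  have hFFT : F * Fᵀ = 1 := by
    ext w w'
    simp only [Matrix.mul_apply, Matrix.transpose_apply, hF, Matrix.of_apply]
    rw [horth (eV w) (eV w')]
    simp [Matrix.one_apply, eV.apply_eq_iff_eq]
  have hFTF : Fᵀ * F = 1 := mul_eq_one_comm.mp hFFT
  set D : Matrix V V ℝ := Matrix.diagonal (fun w => lam (eV w)) with hD
  have hLD : L * Fᵀ = Fᵀ * D := by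
    ext w i
    have := congrFun (heig (eV i)) w
    simp only [Matrix.mulVec, dotProduct, Pi.smul_apply, smul_eq_mul] at this
    have hlft : (L * Fᵀ) w i = ∑ x, L w x * f (eV i) x := by
      simp [Matrix.mul_apply, hF]
    have hrt : (Fᵀ * D) w i = f (eV i) w * lam (eV i) := by
      rw [hD, Matrix.mul_diagonal]
      simp [hF]
    rw [hlft, hrt, this]
    ring
  have hLdecomp : L = Fᵀ * D * F := by
    calc L = L * 1 := by rw [mul_one]
      _ = L * (Fᵀ * F) := by rw [hFTF]
      _ = (L * Fᵀ) * F := by rw [mul_assoc]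
      _ = Fᵀ * D * F := by rw [hLD]
  -- the unit
  set U : (Matrix V V ℝ)ˣ := ⟨Fᵀ, F, by rw [← hFTF], by rw [← hFFT]⟩ with hU
  have hexp : ∀ t : ℝ, NormedSpace.exp (-t • L)
      = Fᵀ * Matrix.diagonal (fun w => Real.exp (-t * lam (eV w))) * F := by
    intro t
    have h1 : -t • L = (U : Matrix V V ℝ) * (-t • D) * ((U⁻¹ : (Matrix V V ℝ)ˣ) : Matrix V V ℝ) := by
      simp only [hU, Units.inv_mk]
      rw [hLdecomp]
      rw [Matrix.mul_smul, Matrix.smul_mul]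
    rw [h1, Matrix.exp_units_conj U (-t • D)]
    have h2 : -t • D = Matrix.diagonal (fun w => -t * lam (eV w)) := by
      rw [hD]
      ext a b
      by_cases hab : a = b <;> simp [Matrix.diagonal_apply, hab]
    rw [h2, Matrix.exp_diagonal]
    have h3 : NormedSpace.exp (fun w : V => -t * lam (eV w))
        = fun w => Real.exp (-t * lam (eV w)) := by
      rw [Pi.exp_def]
      funext w
      rw [← Real.exp_eq_exp_ℝ]
    simp only [hU, Units.inv_mk]
    rw [h3]
  -- entrywise formula
  have hentry : ∀ (t : ℝ) (w : V),
      (NormedSpace.exp (-t • L)).mulVec (Pi.single u 1) w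
        = ∑ i : Fin n, Real.exp (-t * lam i) * (f i u * f i w) := by
    intro t w
    rw [hexp t]
    have h0 : (Fᵀ * Matrix.diagonal (fun w => Real.exp (-t * lam (eV w))) * F).mulVec
        (Pi.single u 1) w
        = (Fᵀ * Matrix.diagonal (fun w => Real.exp (-t * lam (eV w))) * F) w u := by
      rw [Matrix.mulVec_single]
      simp
    rw [h0, Matrix.mul_apply]
    have h1 : ∀ j : V, (Fᵀ * Matrix.diagonal (fun w => Real.exp (-t * lam (eV w)))) w j
        = f (eV j) w * Real.exp (-t * lam (eV j)) := by
      intro j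
      rw [Matrix.mul_diagonal]
      simp [hF]
    simp only [h1]
    simp only [hF, Matrix.of_apply]
    rw [← Equiv.sum_comp eV (fun i => Real.exp (-t * lam i) * (f i u * f i w))]
    apply Finset.sum_congr rfl
    intro j _
    ring
  -- apply analytic lemma with c i = f i u * (f i v - f i u)
  obtain ⟨t, htpos, hpos⟩ := exists_t_aux hn3 lam
    (fun i => f i u * (f i v - f i u)) hmono hlam23
    (by show f ⟨0, by omega⟩ u * (f ⟨0, by omega⟩ v - f ⟨0, by omega⟩ u) = 0
        rw [hconst v u]; ring)
    (by show (0:ℝ) < f ⟨1, by omega⟩ u * (f ⟨1, by omega⟩ v - f ⟨1, by omega⟩ u)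
        nlinarith [hf2.1, hf2.2])
  refine ⟨t, htpos, ?_⟩
  rw [hentry t v, hentry t u]
  have : ∑ i : Fin n, Real.exp (-t * lam i) * (f i u * f i v)
      - ∑ i : Fin n, Real.exp (-t * lam i) * (f i u * f i u)
      = ∑ i : Fin n, Real.exp (-t * lam i) * (f i u * (f i v - f i u)) := by
    rw [← Finset.sum_sub_distrib]
    apply Finset.sum_congr rfl
    intro i _; ring
  linarith [this ▸ hpos]
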